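/- arXiv:1108.1209 — 8 statements merged into one kernel-verified Lean document; each statement's English description precedes it below -/
import Mathlib

section
/- Let U be an open subset of ℂ, let z₀ ∈ U, and let f : U → ℂ be holomorphic with f(z₀) ≠ 0 and f'(z₀) ≠ 0. Then there exists ε > 0 such that the segment {z₀ + t·(f(z₀)/f'(z₀)) : t ∈ [0, ε]} is contained in U and the real-valued function t ↦ |f(z₀ + t·(f(z₀)/f'(z₀)))| is strictly increasing on the interval [0, ε]. -/
/-- Proposition "ascent 0", part (ii): for a holomorphic `f` on an open set `U` with
`f z₀ ≠ 0 ≠ f' z₀`, there is `ε > 0` such that the segment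
`{z₀ + t (f z₀ / f' z₀) : t ∈ [0, ε]}` lies in `U` and
`t ↦ |f(z₀ + t f z₀ / f' z₀)|` is strictly increasing on `[0, ε]`. -/
theorem stmt_1 (U : Set ℂ) (hU : IsOpen U) (z₀ : ℂ) (hz₀ : z₀ ∈ U)
    (f : ℂ → ℂ) (hf : DifferentiableOn ℂ f U)
    (hf0 : f z₀ ≠ 0) (hf'0 : deriv f z₀ ≠ 0) :
    ∃ ε > (0 : ℝ),
      (∀ t : ℝ, t ∈ Set.Icc 0 ε → z₀ + (t : ℂ) * (f z₀ / deriv f z₀) ∈ U) ∧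
      StrictMonoOn (fun t : ℝ => ‖f (z₀ + (t : ℂ) * (f z₀ / deriv f z₀))‖)
        (Set.Icc 0 ε) := by
  set w : ℂ := f z₀ / deriv f z₀ with hw
  set φ : ℝ → ℂ := fun t => z₀ + (t : ℂ) * w with hφdef
  have hφcont : Continuous φ := by simp only [hφdef]; fun_prop
  -- f is analytic on U, so deriv f is continuous on U
  have han : AnalyticOnNhd ℂ f U := hf.analyticOnNhd hU
  have hderivan : AnalyticOnNhd ℂ (deriv f) U := han.deriv
  -- ψ : the derivative of t ↦ ‖f (φ t)‖² divided by 2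
  set ψ : ℝ → ℝ := fun t => (inner ℝ (f (φ t)) (deriv f (φ t) * w) : ℝ) with hψdef
  have hφ0 : φ 0 = z₀ := by simp [hφdef]
  have hψ0 : ψ 0 = Complex.normSq (f z₀) := by
    simp only [hψdef, hφ0, Complex.inner]
    rw [show deriv f z₀ * w = f z₀ by rw [hw]; field_simp]
    simp [Complex.normSq_apply, Complex.mul_re]
  have hψcont0 : ContinuousAt ψ 0 := by
    have h1 : ContinuousAt f z₀ := (han z₀ hz₀).continuousAt
    have h2 : ContinuousAt (deriv f) z₀ := (hderivan z₀ hz₀).continuousAt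
    have : ContinuousAt (fun t => (f (φ t), deriv f (φ t) * w)) 0 := by
      rw [← hφ0] at h1 h2
      exact ((h1.comp hφcont.continuousAt).prodMk
        ((h2.comp hφcont.continuousAt).mul continuousAt_const))
    exact ((continuous_inner (𝕜 := ℝ) (E := ℂ)).continuousAt.comp this : _)
  have hψ0pos : 0 < ψ 0 := by rw [hψ0]; exact Complex.normSq_pos.2 hf0
  -- find δ with ball ⊆ φ⁻¹ U and ψ > 0 on ball
  have hUnh : φ ⁻¹' U ∈ nhds (0 : ℝ) := hφcont.continuousAt.preimage_mem_nhds (by rw [hφ0]; exact hU.mem_nhds hz₀)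
  have hψnh : ψ ⁻¹' Set.Ioi 0 ∈ nhds (0 : ℝ) := hψcont0.preimage_mem_nhds (isOpen_Ioi.mem_nhds hψ0pos)
  obtain ⟨δ, hδpos, hδ⟩ := Metric.mem_nhds_iff.1 (Filter.inter_mem hUnh hψnh)
  refine ⟨δ / 2, by positivity, ?_, ?_⟩
  · intro t ht
    have : t ∈ Metric.ball (0 : ℝ) δ := by
      simp only [Metric.mem_ball, Real.dist_eq, sub_zero]
      rw [abs_of_nonneg ht.1]; linarith [ht.2]
    exact (hδ this).1
  · -- strict mono
    have hmem : ∀ t ∈ Set.Icc (0:ℝ) (δ/2), t ∈ Metric.ball (0:ℝ) δ := by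
      intro t ht
      simp only [Metric.mem_ball, Real.dist_eq, sub_zero]
      rw [abs_of_nonneg ht.1]; linarith [ht.2]
    have key : ∀ t ∈ Metric.ball (0:ℝ) δ,
        HasDerivAt (fun s => ‖f (φ s)‖ ^ 2) (2 * ψ t) t := by
      intro t ht
      have htU : φ t ∈ U := (hδ ht).1
      have hfd : DifferentiableAt ℂ f (φ t) := hf.differentiableAt (hU.mem_nhds htU)
      have hφd : HasDerivAt φ w t := by
        have h1 : HasDerivAt (fun s : ℝ => (s : ℂ)) 1 t := Complex.ofRealCLM.hasDerivAt
        simpa [hφdef] using ((h1.mul_const w).const_add z₀)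
      have hg : HasDerivAt (fun s => f (φ s)) (deriv f (φ t) * w) t := by
        have := (hfd.hasFDerivAt.restrictScalars ℝ).comp_hasDerivAt t hφd
        have hap : (fderiv ℂ f (φ t)) w = deriv f (φ t) * w := by
          have : (fderiv ℂ f (φ t)) w = w • (fderiv ℂ f (φ t)) 1 := by
            rw [← (fderiv ℂ f (φ t)).map_smul]; simp
          rw [this, fderiv_apply_one_eq_deriv]; simp [mul_comm]
        have h2 : HasDerivAt (f ∘ φ) (deriv f (φ t) * w) t := by simpa [hap] using this
        exact h2
      exact hg.norm_sq
    have hmono : StrictMonoOn (fun s => ‖f (φ s)‖ ^ 2) (Set.Icc 0 (δ/2)) := by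
      apply strictMonoOn_of_deriv_pos (convex_Icc _ _)
      · intro t ht
        exact (key t (hmem t ht)).differentiableAt.continuousAt.continuousWithinAt
      · intro t ht
        rw [interior_Icc] at ht
        have hb : t ∈ Metric.ball (0:ℝ) δ := hmem t (Set.mem_Icc_of_Ioo ht)
        rw [(key t hb).deriv]
        have : 0 < ψ t := (hδ hb).2
        linarith
    intro s hs t ht hst
    have := hmono hs ht hst
    have hn : ∀ u : ℝ, ‖f (φ u)‖ = ‖f (φ u)‖ := fun u => rfl
    refine lt_of_pow_lt_pow_left₀ 2 (norm_nonneg _) ?_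
    simpa [hφdef] using this
end

section
/- Let U be an open subset of ℂ, let z₀ ∈ U, let k ≥ 2 be an integer, and let f : U → ℂ be holomorphic with f(z₀) ≠ 0, with f⁽¹⁾(z₀) = f⁽²⁾(z₀) = ⋯ = f⁽ᵏ⁻¹⁾(z₀) = 0, and f⁽ᵏ⁾(z₀) ≠ 0. Let w ∈ ℂ be any complex number with wᵏ = f(z₀)/f⁽ᵏ⁾(z₀). Then there exists ε > 0 such that for every j ∈ {0, 1, …, k−1}, the segment {z₀ + t·e^{2πij/k}·w : t ∈ [0, ε]} is contained in U and the function t ↦ |f(z₀ + t·e^{2πij/k}·w)| is strictly increasing on [0, ε]; in particular |f| increases strictly on all k segments simultaneously. -/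
open Complex Function Nat Topology

private lemma coeff_eq_iteratedDeriv' {f : ℂ → ℂ} {p : FormalMultilinearSeries ℂ ℂ ℂ} {c : ℂ}
    (hp : HasFPowerSeriesAt f p c) (n : ℕ) :
    p.coeff n = iteratedDeriv n f c / n ! := by
  obtain ⟨r, hr⟩ := hp
  have h := hr.factorial_smul (1 : ℂ) n
  rw [iteratedDeriv_eq_iteratedFDeriv]
  have h1 : iteratedFDeriv ℂ n f c (fun _ => (1:ℂ)) = (n ! : ℂ) * p.coeff n := by
    rw [← h, nsmul_eq_mul]
    rfl
  rw [h1, mul_div_cancel_left₀ _ (Nat.cast_ne_zero.mpr (Nat.factorial_ne_zero n) : (n ! : ℂ) ≠ 0)]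

private lemma pow_mul_iterate_dslope' : ∀ (m : ℕ) (h : ℂ → ℂ)
    (p : FormalMultilinearSeries ℂ ℂ ℂ) (c : ℂ), HasFPowerSeriesAt h p c →
    (∀ j, j < m → p.coeff j = 0) →
    ∀ z, h z = (z - c) ^ m * ((swap dslope c)^[m] h z) := by
  intro m
  induction m with
  | zero => intro h p c _ _ z; simp
  | succ m ih =>
    intro h p c hp hcoeff z
    have hc0 : h c = 0 := by
      have h0 := hp.coeff_zero 1
      have : p.coeff 0 = 0 := hcoeff 0 (Nat.succ_pos m)
      rw [← h0]; exact this
    have key : h z = (z - c) * dslope h c z := by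
      have hs := sub_smul_dslope h c z
      rw [smul_eq_mul, hc0, sub_zero] at hs
      exact hs.symm
    have hfs : ∀ j, j < m → p.fslope.coeff j = 0 := fun j hj => by
      rw [FormalMultilinearSeries.coeff_fslope]
      exact hcoeff (j + 1) (Nat.succ_lt_succ hj)
    have hds : dslope h c = swap dslope c h := rfl
    rw [key, ih (dslope h c) p.fslope c hp.has_fpower_series_dslope_fslope hfs z,
      hds, ← iterate_succ_apply, pow_succ]
    ring

/-- Proposition "saddle ascent 0": from a point where the derivatives of order
`1, …, k-1` vanish but `f z₀ ≠ 0 ≠ f⁽ᵏ⁾ z₀`, with `w` a `k`-th root of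
`f z₀ / f⁽ᵏ⁾ z₀`, there is `ε > 0` such that along each of the `k` radial
segments `t ↦ z₀ + t e^{2πij/k} w`, `t ∈ [0, ε]`, the segment lies in `U`
and `|f|` strictly increases. -/
theorem stmt_2 (U : Set ℂ) (hU : IsOpen U) (z₀ : ℂ) (hz₀ : z₀ ∈ U)
    (k : ℕ) (hk : 2 ≤ k) (f : ℂ → ℂ) (hf : DifferentiableOn ℂ f U)
    (hf0 : f z₀ ≠ 0)
    (hmid : ∀ j : ℕ, 1 ≤ j → j ≤ k - 1 → iteratedDeriv j f z₀ = 0)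
    (hfk : iteratedDeriv k f z₀ ≠ 0)
    (w : ℂ) (hw : w ^ k = f z₀ / iteratedDeriv k f z₀) :
    ∃ ε > (0 : ℝ), ∀ j : ℕ, j < k →
      (∀ t : ℝ, t ∈ Set.Icc 0 ε →
        z₀ + (t : ℂ) * (Complex.exp (2 * Real.pi * Complex.I * j / k) * w) ∈ U) ∧
      StrictMonoOn
        (fun t : ℝ =>
          ‖f (z₀ + (t : ℂ) * (Complex.exp (2 * Real.pi * Complex.I * j / k) * w))‖)
        (Set.Icc 0 ε) := by
  have hk0 : k ≠ 0 := by omega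
  have hk1 : k - 1 + 1 = k := by omega
  have hwk : w ^ k ≠ 0 := by rw [hw]; exact div_ne_zero hf0 hfk
  have hw0 : w ≠ 0 := fun h => hwk (by rw [h, zero_pow hk0])
  have hwabs : 0 < ‖w‖ := by
    simpa [norm_pos_iff] using hw0
  -- analyticity of the derivative and the factorization
  have hfa : AnalyticOnNhd ℂ f U := hf.analyticOnNhd hU
  obtain ⟨p, hp⟩ : AnalyticAt ℂ (deriv f) z₀ := hfa.deriv z₀ hz₀
  set G : ℂ → ℂ := (swap dslope z₀)^[k - 1] (deriv f) with hGdef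
  have hGps : HasFPowerSeriesAt G (FormalMultilinearSeries.fslope^[k - 1] p) z₀ :=
    hp.has_fpower_series_iterate_dslope_fslope (k - 1)
  have hGcont : ContinuousAt G z₀ := hGps.continuousAt
  have hGval : G z₀ = iteratedDeriv k f z₀ / ((k - 1)! : ℂ) := by
    have h0 := hGps.coeff_zero 1
    have h1 : (FormalMultilinearSeries.fslope^[k - 1] p).coeff 0 = p.coeff (0 + (k - 1)) :=
      FormalMultilinearSeries.coeff_iterate_fslope (k - 1) 0
    have h2 : p.coeff (k - 1) = iteratedDeriv (k - 1) (deriv f) z₀ / ((k - 1)! : ℂ) :=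
      coeff_eq_iteratedDeriv' hp (k - 1)
    have h3 : iteratedDeriv (k - 1) (deriv f) z₀ = iteratedDeriv k f z₀ := by
      rw [← iteratedDeriv_succ', hk1]
    rw [← h0]
    show (FormalMultilinearSeries.fslope^[k - 1] p).coeff 0 = _
    rw [h1, zero_add, h2, h3]
  have hfact : ∀ z, deriv f z = (z - z₀) ^ (k - 1) * G z := by
    refine pow_mul_iterate_dslope' (k - 1) (deriv f) p z₀ hp (fun j hj => ?_)
    rw [coeff_eq_iteratedDeriv' hp j, ← iteratedDeriv_succ',
      hmid (j + 1) (by omega) (by omega), zero_div]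
  -- the positivity function
  set Φ : ℂ → ℝ := fun z => ((starRingEnd ℂ) (f z) * (w ^ k * G z)).re with hΦdef
  have hfc : ContinuousAt f z₀ := (hf.differentiableAt (hU.mem_nhds hz₀)).continuousAt
  have hΦcont : ContinuousAt Φ z₀ := by
    exact Complex.continuous_re.continuousAt.comp
      (((continuous_star.continuousAt.comp hfc)).mul (continuousAt_const.mul hGcont))
  have hΦpos : 0 < Φ z₀ := by
    have h1 : w ^ k * G z₀ = f z₀ / ((k - 1)! : ℂ) := by
      rw [hw, hGval]
      field_simp
    have h2 : Φ z₀ = Complex.normSq (f z₀) / ((k - 1)! : ℝ) := by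
      show ((starRingEnd ℂ) (f z₀) * (w ^ k * G z₀)).re = _
      rw [h1, mul_div_assoc', ← Complex.normSq_eq_conj_mul_self]
      rw [show (((k-1)! : ℂ)) = (((k-1)! : ℝ) : ℂ) by push_cast; ring,
        ← Complex.ofReal_div, Complex.ofReal_re]
    rw [h2]
    exact div_pos (Complex.normSq_pos.mpr hf0) (by positivity)
  -- choose the radius
  have hev : ∀ᶠ z in 𝓝 z₀, 0 < Φ z ∧ z ∈ U :=
    (hΦcont.eventually (eventually_gt_nhds hΦpos)).and (hU.mem_nhds hz₀)
  obtain ⟨r, hr0, hrball⟩ := Metric.eventually_nhds_iff.mp hev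
  set ε : ℝ := r / (2 * ‖w‖) with hεdef
  have hε : 0 < ε := by positivity
  -- the key claim for a general direction u
  have key : ∀ u : ℂ, ‖u‖ = ‖w‖ → u ^ k = w ^ k →
      (∀ t : ℝ, t ∈ Set.Icc 0 ε → z₀ + (t : ℂ) * u ∈ U) ∧
      StrictMonoOn (fun t : ℝ => ‖f (z₀ + (t : ℂ) * u)‖) (Set.Icc 0 ε) := by
    intro u huabs hupow
    have hmem : ∀ t : ℝ, t ∈ Set.Icc 0 ε →
        0 < Φ (z₀ + (t : ℂ) * u) ∧ z₀ + (t : ℂ) * u ∈ U := by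
      intro t ht
      refine hrball ?_
      rw [Complex.dist_eq, add_sub_cancel_left, norm_mul, Complex.norm_real, Real.norm_eq_abs, huabs,
        _root_.abs_of_nonneg ht.1]
      have h1 : t * ‖w‖ ≤ ε * ‖w‖ :=
        mul_le_mul_of_nonneg_right ht.2 (norm_nonneg w)
      have h2 : ε * ‖w‖ = r / 2 := by
        rw [hεdef]; field_simp
      linarith
    refine ⟨fun t ht => (hmem t ht).2, ?_⟩
    set γ : ℝ → ℂ := fun t => z₀ + (t : ℂ) * u with hγdef
    set H : ℝ → ℝ := fun t => ((starRingEnd ℂ) (f (γ t)) * f (γ t)).re with hHdef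
    have hHnormSq : ∀ t, H t = Complex.normSq (f (γ t)) := by
      intro t
      rw [hHdef]
      simp only [← Complex.normSq_eq_conj_mul_self, Complex.ofReal_re]
    have hγcont : Continuous γ := by
      apply Continuous.add continuous_const
      exact (Complex.continuous_ofReal).mul continuous_const
    have hHmono : StrictMonoOn H (Set.Icc 0 ε) := by
      apply strictMonoOn_of_deriv_pos (convex_Icc 0 ε)
      · have hfU : ContinuousOn f U := hf.continuousOn
        have hγmaps : Set.MapsTo γ (Set.Icc 0 ε) U := fun t ht => (hmem t ht).2
        have hFc : ContinuousOn (fun t => f (γ t)) (Set.Icc 0 ε) :=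
          hfU.comp hγcont.continuousOn hγmaps
        exact Complex.continuous_re.comp_continuousOn
          ((continuous_star.comp_continuousOn hFc).mul hFc)
      · intro t ht
        rw [interior_Icc] at ht
        have htI : t ∈ Set.Icc 0 ε := ⟨le_of_lt ht.1, le_of_lt ht.2⟩
        obtain ⟨hΦz, hzU⟩ := hmem t htI
        -- derivative of F
        have hinner : HasDerivAt (fun z : ℂ => z₀ + z * u) u (t : ℂ) := by
          simpa using ((hasDerivAt_id (t : ℂ)).mul_const u).const_add z₀
        have hdf : HasDerivAt f (deriv f (γ t)) (γ t) :=
          (hf.differentiableAt (hU.mem_nhds hzU)).hasDerivAt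
        have houter : HasDerivAt (fun z : ℂ => f (z₀ + z * u)) (deriv f (γ t) * u) (t : ℂ) := by
          have := HasDerivAt.comp (t : ℂ) (by exact hdf) hinner
          exact this
        have hF : HasDerivAt (fun s : ℝ => f (γ s)) (deriv f (γ t) * u) t :=
          houter.comp_ofReal
        have hFc : HasDerivAt (fun s : ℝ => (starRingEnd ℂ) (f (γ s)))
            ((starRingEnd ℂ) (deriv f (γ t) * u)) t := by
          simpa [Complex.star_def] using hF.star
        have hmul := hFc.mul hF
        have hH' : HasDerivAt H
            (((starRingEnd ℂ) (deriv f (γ t) * u) * f (γ t) +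
              (starRingEnd ℂ) (f (γ t)) * (deriv f (γ t) * u)).re) t :=
          Complex.reCLM.hasFDerivAt.comp_hasDerivAt t hmul
        rw [hH'.deriv]
        have hswap : (starRingEnd ℂ) (deriv f (γ t) * u) * f (γ t) =
            (starRingEnd ℂ) ((starRingEnd ℂ) (f (γ t)) * (deriv f (γ t) * u)) := by
          simp only [map_mul, Complex.conj_conj]; ring
        have hre2 : ((starRingEnd ℂ) (deriv f (γ t) * u) * f (γ t) +
              (starRingEnd ℂ) (f (γ t)) * (deriv f (γ t) * u)).re =
            2 * ((starRingEnd ℂ) (f (γ t)) * (deriv f (γ t) * u)).re := by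
          rw [hswap, Complex.add_re, Complex.conj_re]; ring
        have hγz : γ t - z₀ = (t : ℂ) * u := by rw [hγdef]; ring
        have hu : u ^ (k - 1) * u = w ^ k := by rw [← pow_succ, hk1, hupow]
        have hx : (starRingEnd ℂ) (f (γ t)) * (deriv f (γ t) * u) =
            ((t ^ (k - 1) : ℝ) : ℂ) * ((starRingEnd ℂ) (f (γ t)) * (w ^ k * G (γ t))) := by
          rw [hfact (γ t), hγz, mul_pow, ← hu, Complex.ofReal_pow]
          ring
        rw [hre2, hx, Complex.re_ofReal_mul]
        have hpowpos : 0 < t ^ (k - 1) := pow_pos ht.1 _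
        have : ((starRingEnd ℂ) (f (γ t)) * (w ^ k * G (γ t))).re = Φ (γ t) := rfl
        rw [this]
        positivity
    -- conclude for abs
    intro x hx y hy hxy
    have h1 := hHmono hx hy hxy
    simp only [Complex.norm_def]
    rw [hHnormSq x, hHnormSq y] at h1
    exact Real.sqrt_lt_sqrt (Complex.normSq_nonneg _) h1
  refine ⟨ε, hε, fun j hj => ?_⟩
  have habs : ‖Complex.exp (2 * Real.pi * Complex.I * j / k) * w‖
      = ‖w‖ := by
    rw [norm_mul, show (2 * (Real.pi:ℂ) * Complex.I * j / k) = ((2 * Real.pi * j / k : ℝ) : ℂ) * Complex.I by push_cast; ring,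
      Complex.norm_exp_ofReal_mul_I, one_mul]
  have hpow : (Complex.exp (2 * Real.pi * Complex.I * j / k) * w) ^ k = w ^ k := by
    rw [mul_pow, ← Complex.exp_nat_mul,
      show (k : ℂ) * (2 * (Real.pi:ℂ) * Complex.I * j / k) = ((j : ℤ) : ℂ) * (2 * Real.pi * Complex.I) by
        rw [mul_comm ((k:ℂ)), div_mul_cancel₀ _ (Nat.cast_ne_zero.mpr hk0 : (k:ℂ) ≠ 0)]
        push_cast; ring,
      Complex.exp_int_mul_two_pi_mul_I, one_mul]
  exact key _ habs hpow
end

section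
/- Let ε > 0 and let g be holomorphic on an open subset of ℂ containing the real segment [0, ε], with g(0) = 1. Suppose that for every u ∈ [0, ε] the derivative g'(u) lies in the open sector S_{π/4}, i.e. Re g'(u) > |Im g'(u)|. Then for every u ∈ (0, ε] the value g(u) also lies in S_{π/4}, and the function u ↦ |g(u)| is strictly increasing on [0, ε]. -/
/-- Key lemma for Proposition "ascent 0": if `g` is holomorphic near the real
segment `[0, ε]`, `g 0 = 1`, and `g'` stays in the open sector
`S_{π/4} = {z : Re z > |Im z|}` on `[0, ε]`, then `g` itself stays in `S_{π/4}`
on `(0, ε]` and `t ↦ |g t|` is strictly increasing on `[0, ε]`. -/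
theorem stmt_3 (ε : ℝ) (hε : 0 < ε) (V : Set ℂ) (hV : IsOpen V)
    (hseg : ∀ t : ℝ, t ∈ Set.Icc 0 ε → (t : ℂ) ∈ V)
    (g : ℂ → ℂ) (hg : DifferentiableOn ℂ g V) (hg0 : g 0 = 1)
    (hd : ∀ t : ℝ, t ∈ Set.Icc 0 ε → (deriv g t).re > |(deriv g t).im|) :
    (∀ t : ℝ, t ∈ Set.Ioc 0 ε → (g t).re > |(g t).im|) ∧
    StrictMonoOn (fun t : ℝ => ‖g t‖) (Set.Icc 0 ε) := by
  have hF : ∀ t : ℝ, t ∈ Set.Icc 0 ε → HasDerivAt (fun s : ℝ => g s) (deriv g t) t := by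
    intro t ht
    exact ((hg.differentiableAt (hV.mem_nhds (hseg t ht))).hasDerivAt).comp_ofReal
  have hre : ∀ t ∈ Set.Icc 0 ε,
      HasDerivAt (fun s : ℝ => (g s).re) (deriv g (t : ℂ)).re t := by
    intro t ht
    exact (Complex.reCLM.hasFDerivAt.comp_hasDerivAt t (hF t ht))
  have him : ∀ t ∈ Set.Icc 0 ε,
      HasDerivAt (fun s : ℝ => (g s).im) (deriv g (t : ℂ)).im t := by
    intro t ht
    exact (Complex.imCLM.hasFDerivAt.comp_hasDerivAt t (hF t ht))
  have hcre : ContinuousOn (fun s : ℝ => (g s).re) (Set.Icc 0 ε) :=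
    fun t ht => ((hre t ht).continuousAt).continuousWithinAt
  have hcim : ContinuousOn (fun s : ℝ => (g s).im) (Set.Icc 0 ε) :=
    fun t ht => ((him t ht).continuousAt).continuousWithinAt
  -- p = re - im, q = re + im, both strictly increasing
  have hmono_p : StrictMonoOn (fun s : ℝ => (g s).re - (g s).im) (Set.Icc 0 ε) := by
    apply strictMonoOn_of_deriv_pos (convex_Icc 0 ε) (hcre.sub hcim)
    intro x hx
    rw [interior_Icc] at hx
    have hx' : x ∈ Set.Icc 0 ε := ⟨hx.1.le, hx.2.le⟩
    rw [((hre x hx').sub (him x hx')).deriv]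
    have h := hd x hx'
    have := le_abs_self (deriv g (x : ℂ)).im
    linarith
  have hmono_q : StrictMonoOn (fun s : ℝ => (g s).re + (g s).im) (Set.Icc 0 ε) := by
    apply strictMonoOn_of_deriv_pos (convex_Icc 0 ε) (hcre.add hcim)
    intro x hx
    rw [interior_Icc] at hx
    have hx' : x ∈ Set.Icc 0 ε := ⟨hx.1.le, hx.2.le⟩
    rw [((hre x hx').add (him x hx')).deriv]
    have h := hd x hx'
    have := neg_abs_le (deriv g (x : ℂ)).im
    linarith
  have h0mem : (0 : ℝ) ∈ Set.Icc 0 ε := ⟨le_refl 0, hε.le⟩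
  have key : ∀ t : ℝ, t ∈ Set.Ioc 0 ε → (g t).re > |(g t).im| := by
    intro t ht
    have ht' : t ∈ Set.Icc 0 ε := ⟨ht.1.le, ht.2⟩
    have hp := hmono_p h0mem ht' ht.1
    have hq := hmono_q h0mem ht' ht.1
    simp only [Complex.ofReal_zero, hg0, Complex.one_re, Complex.one_im] at hp hq
    rw [gt_iff_lt, abs_lt]
    constructor <;> linarith
  refine ⟨key, ?_⟩
  -- r = re^2 + im^2 strictly increasing
  have hmono_r : StrictMonoOn (fun s : ℝ => (g s).re ^ 2 + (g s).im ^ 2) (Set.Icc 0 ε) := by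
    apply strictMonoOn_of_deriv_pos (convex_Icc 0 ε)
      ((hcre.pow 2).add (hcim.pow 2))
    intro x hx
    rw [interior_Icc] at hx
    have hx' : x ∈ Set.Icc 0 ε := ⟨hx.1.le, hx.2.le⟩
    have hdr : HasDerivAt (fun s : ℝ => (g s).re ^ 2 + (g s).im ^ 2)
        (2 * (g x).re ^ 1 * (deriv g (x : ℂ)).re + 2 * (g x).im ^ 1 * (deriv g (x : ℂ)).im) x := by
      exact (((hre x hx').pow 2).add ((him x hx').pow 2)).congr_deriv (by simp)
    show 0 < deriv (fun s : ℝ => (g s).re ^ 2 + (g s).im ^ 2) x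
    rw [hdr.deriv]
    have h1 := key x ⟨hx.1, hx.2.le⟩
    have h2 := hd x hx'
    have hb := abs_nonneg (g x).im
    have hb' := abs_nonneg (deriv g (x : ℂ)).im
    have hmul : |(g x).im| * |(deriv g (x : ℂ)).im| < (g x).re * (deriv g (x : ℂ)).re :=
      mul_lt_mul'' h1.lt h2 hb hb'
    have hle : -(|(g x).im| * |(deriv g (x : ℂ)).im|) ≤ (g x).im * (deriv g (x : ℂ)).im := by
      have := neg_abs_le ((g x).im * (deriv g (x : ℂ)).im)
      rw [abs_mul] at this
      exact this
    nlinarith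
  intro x hx y hy hxy
  have hr := hmono_r hx hy hxy
  have hx2 : ‖g x‖ ^ 2 = (g x).re ^ 2 + (g x).im ^ 2 := by
    rw [Complex.sq_norm, Complex.normSq_apply]; ring
  have hy2 : ‖g y‖ ^ 2 = (g y).re ^ 2 + (g y).im ^ 2 := by
    rw [Complex.sq_norm, Complex.normSq_apply]; ring
  have : ‖g x‖ ^ 2 < ‖g y‖ ^ 2 := by rw [hx2, hy2]; exact hr
  exact lt_of_pow_lt_pow_left₀ 2 (norm_nonneg _) this
end

section
/- Let P be a polynomial with complex coefficients, let c ∈ ℂ with P'(c) ≠ 0, and let r > 0. Define the Krawczyk set K := { c − P(c)/P'(c) + (1 − P'(z)/P'(c))·w : z, w ∈ ℂ, |z − c| ≤ r, |w| ≤ r }. If K is contained in the open ball {ζ ∈ ℂ : |ζ − c| < r}, then P has exactly one root in the closed ball {ζ ∈ ℂ : |ζ − c| ≤ r}. -/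
/-- Krawczyk–Rump test: if the Krawczyk set
`K = {c - P(c)/P'(c) + (1 - P'(z)/P'(c))·w : |z - c| ≤ r, |w| ≤ r}` is contained
in the open ball of radius `r` about `c`, then `P` has exactly one root in the
closed ball of radius `r` about `c`. -/
theorem stmt_6 (P : Polynomial ℂ) (c : ℂ) (r : ℝ) (hr : 0 < r)
    (hP' : P.derivative.eval c ≠ 0)
    (hK : ∀ z w : ℂ, ‖z - c‖ ≤ r → ‖w‖ ≤ r →
      ‖(c - P.eval c / P.derivative.eval c +
          (1 - P.derivative.eval z / P.derivative.eval c) * w) - c‖ < r) :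
    ∃! ζ : ℂ, ‖ζ - c‖ ≤ r ∧ P.eval ζ = 0 := by
  set d := P.derivative.eval c with hd
  set a := -(P.eval c / d) with ha
  have habs_r : ‖(r : ℂ)‖ = r := by
    simpa using abs_of_pos hr
  -- rewrite the Krawczyk hypothesis
  have hK' : ∀ z w : ℂ, ‖(z - c)‖ ≤ r → ‖w‖ ≤ r →
      ‖(a + (1 - P.derivative.eval z / d) * w)‖ < r := by
    intro z w hz hw
    have := hK z w hz hw
    have e : (c - P.eval c / d + (1 - P.derivative.eval z / d) * w) - c
        = a + (1 - P.derivative.eval z / d) * w := by rw [ha]; ring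
    rwa [e] at this
  -- step 1: each layer has contraction factor < 1
  have h1 : ∀ z : ℂ, ‖(z - c)‖ ≤ r →
      ‖(1 - P.derivative.eval z / d)‖ < 1 := by
    intro z hz
    set L := 1 - P.derivative.eval z / d with hL
    have h₁ := hK' z (r : ℂ) hz (le_of_eq habs_r)
    have h₂ := hK' z (-(r : ℂ)) hz (by simpa using le_of_eq habs_r)
    have e2 : ‖(2 * L * (r : ℂ))‖ = 2 * ‖L‖ * r := by
      rw [norm_mul, norm_mul, habs_r]
      simp
    have e3 : (2 : ℂ) * L * (r : ℂ) = (a + L * r) - (a + L * (-(r:ℂ))) := by ring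
    have htri : ‖((a + L * r) - (a + L * (-(r:ℂ))))‖
        ≤ ‖(a + L * r)‖ + ‖(a + L * (-(r:ℂ)))‖ :=
      norm_sub_le _ _
    rw [← e3, e2] at htri
    nlinarith [norm_nonneg L]
  -- step 2: maximum of the contraction factor over the compact ball
  have hcont : Continuous fun z : ℂ => ‖(1 - P.derivative.eval z / d)‖ :=
    continuous_norm.comp (by continuity)
  obtain ⟨z₀, hz₀mem, hmax⟩ :=
    (isCompact_closedBall c r).exists_isMaxOn
      ⟨c, Metric.mem_closedBall_self hr.le⟩ hcont.continuousOn
  set k := ‖(1 - P.derivative.eval z₀ / d)‖ with hk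
  have hz₀ : ‖(z₀ - c)‖ ≤ r := by
    rwa [Metric.mem_closedBall, Complex.dist_eq] at hz₀mem
  have hk1 : k < 1 := h1 z₀ hz₀
  have hk0 : 0 ≤ k := norm_nonneg _
  have hmax' : ∀ x : ℂ, ‖(x - c)‖ ≤ r →
      ‖(1 - P.derivative.eval x / d)‖ ≤ k := by
    intro x hx
    exact hmax (by rwa [Metric.mem_closedBall, Complex.dist_eq] : x ∈ Metric.closedBall c r)
  -- step 3: |a| + k * r < r
  have hstep3 : ‖a‖ + k * r < r := by
    set L₀ := 1 - P.derivative.eval z₀ / d with hL₀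
    by_cases haz : a = 0
    · simp only [haz, norm_zero, zero_add]
      nlinarith
    · by_cases hLz : L₀ = 0
      · have h0 := hK' z₀ 0 hz₀ (by simpa using hr.le)
        simp only [mul_zero, add_zero] at h0
        have hk' : k = 0 := by rw [hk, hLz]; simp
        rw [hk']; simpa using h0
      · have hAa : (‖a‖ : ℂ) ≠ 0 := by
          exact_mod_cast norm_ne_zero_iff.mpr haz
        set w := (r : ℂ) * (a / (‖a‖ : ℂ)) * ((k : ℂ) / L₀) with hw
        have haa : ‖(a / (‖a‖ : ℂ))‖ = 1 := by
          rw [norm_div]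
          simp [norm_ne_zero_iff.mpr haz]
        have hkabs : ‖(k : ℂ)‖ = k := by
          simpa using abs_of_nonneg hk0
        have hkL : ‖((k : ℂ) / L₀)‖ = 1 := by
          rw [norm_div, hkabs, hk, div_self (norm_ne_zero_iff.mpr hLz)]
        have hwabs : ‖w‖ = r := by
          rw [hw, norm_mul, norm_mul, habs_r, haa, hkL]; ring
        have hlt := hK' z₀ w hz₀ (le_of_eq hwabs)
        rw [← hL₀] at hlt
        have haz' : 0 < ‖a‖ := norm_pos_iff.mpr haz
        clear_value w L₀ k a d
        have e : a + L₀ * w = (1 + (↑(r * k / ‖a‖) : ℂ)) * a := by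
          rw [hw]
          push_cast
          field_simp
        rw [e, norm_mul] at hlt
        have e1 : ‖(1 + (↑(r * k / ‖a‖) : ℂ))‖
            = 1 + r * k / ‖a‖ := by
          rw [show (1 : ℂ) + (↑(r * k / ‖a‖) : ℂ)
              = ((1 + r * k / ‖a‖ : ℝ) : ℂ) by push_cast; ring]
          rw [Complex.norm_real, Real.norm_eq_abs]
          refine abs_of_nonneg ?_
          have : 0 ≤ r * k / ‖a‖ := by positivity
          linarith
        rw [e1] at hlt
        have e2 : (1 + r * k / ‖a‖) * ‖a‖
            = ‖a‖ + k * r := by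
          field_simp
        rw [e2] at hlt
        exact hlt
  -- the simplified Newton map
  set g : ℂ → ℂ := fun x => x - P.eval x / d with hg
  have hgderiv : ∀ x : ℂ, HasDerivAt g (1 - P.derivative.eval x / d) x := by
    intro x
    exact (hasDerivAt_id' x).sub ((P.hasDerivAt x).div_const d)
  have hgc : g c - c = a := by rw [hg, ha]; ring
  have hlip : ∀ x y : ℂ, ‖(x - c)‖ ≤ r → ‖(y - c)‖ ≤ r →
      ‖(g y - g x)‖ ≤ k * ‖(y - x)‖ := by
    intro x y hx hy
    have hmem : ∀ t : ℂ, ‖(t - c)‖ ≤ r → t ∈ Metric.closedBall c r := by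
      intro t ht
      rwa [Metric.mem_closedBall, Complex.dist_eq]
    have := Convex.norm_image_sub_le_of_norm_hasDerivWithin_le
      (f := g) (f' := fun t => 1 - P.derivative.eval t / d) (s := Metric.closedBall c r)
      (fun t ht => (hgderiv t).hasDerivWithinAt)
      (fun t ht => by
        have := hmax' t (by rwa [Metric.mem_closedBall, Complex.dist_eq] at ht)
        simpa using this)
      (convex_closedBall c r) (hmem x hx) (hmem y hy)
    simpa using this
  -- g maps the closed ball into itself
  have hself : ∀ x : ℂ, ‖(x - c)‖ ≤ r → ‖(g x - c)‖ ≤ r := by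
    intro x hx
    have e : g x - c = a + (g x - g c) := by rw [← hgc]; ring
    have h2 : ‖(g x - g c)‖ ≤ k * ‖(x - c)‖ :=
      hlip c x (by simpa using hr.le) hx
    have h3 : k * ‖(x - c)‖ ≤ k * r :=
      mul_le_mul_of_nonneg_left hx hk0
    calc ‖(g x - c)‖ ≤ ‖a‖ + ‖(g x - g c)‖ := by
          rw [e]; exact norm_add_le _ _
      _ ≤ ‖a‖ + k * r := by linarith
      _ ≤ r := hstep3.le
  -- fixed points of g are roots of P and conversely
  have hfix : ∀ x : ℂ, (g x = x ↔ P.eval x = 0) := by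
    intro x
    rw [hg]
    constructor
    · intro h
      have : P.eval x / d = 0 := by
        have := sub_eq_iff_eq_add.mp h
        linear_combination -this
      exact (div_eq_zero_iff.mp this).resolve_right hP'
    · intro h; simp [h]
  -- Banach fixed point on the closed ball
  set S := Metric.closedBall c r with hS
  haveI : Nonempty S := ⟨⟨c, Metric.mem_closedBall_self hr.le⟩⟩
  have hmemS : ∀ x : ℂ, x ∈ S ↔ ‖(x - c)‖ ≤ r := by
    intro x; rw [hS, Metric.mem_closedBall, Complex.dist_eq]
  haveI hcompl : CompleteSpace S := (Metric.isClosed_closedBall (x := c) (ε := r)).completeSpace_coe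
  set F : S → S := fun x => ⟨g x, (hmemS _).mpr (hself x ((hmemS _).mp x.2))⟩ with hF
  have hkn : (⟨k, hk0⟩ : NNReal) < 1 := by
    exact NNReal.coe_lt_coe.mp hk1
  have hcontr : ContractingWith ⟨k, hk0⟩ F := by
    constructor
    · exact hkn
    · refine LipschitzWith.of_dist_le_mul ?_
      intro x y
      have := hlip y x ((hmemS _).mp y.2) ((hmemS _).mp x.2)
      simp [hF, Subtype.dist_eq, Complex.dist_eq]; exact this
  let ζS := ContractingWith.fixedPoint F hcontr
  have hζfix : F ζS = ζS := ContractingWith.fixedPoint_isFixedPt hcontr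
  set ζ := (ζS : ℂ) with hζ
  have hζmem : ‖(ζ - c)‖ ≤ r := (hmemS _).mp ζS.2
  have hgζ : g ζ = ζ := by
    have : F ζS = ζS := hζfix
    exact congrArg Subtype.val this
  have hroot : P.eval ζ = 0 := (hfix ζ).mp hgζ
  refine ⟨ζ, ⟨hζmem, hroot⟩, ?_⟩
  rintro y ⟨hymem, hyroot⟩
  have hgy : g y = y := (hfix y).mpr hyroot
  have := hlip ζ y hζmem hymem
  rw [hgy, hgζ] at this
  have h0 : ‖(y - ζ)‖ = 0 := by
    nlinarith [norm_nonneg (y - ζ)]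
  have := norm_eq_zero.mp h0
  linear_combination this
end

section
/- Let Q : ℂ × ℂ → ℂ be a polynomial, let (x₀, y₀) ∈ ℂ² with x₀ ≠ 0, y₀ ≠ 0, Q(x₀, y₀) = 0 and Q_y(x₀, y₀) ≠ 0, and let y be a holomorphic function on a neighborhood of x₀ with y(x₀) = y₀ and Q(x, y(x)) = 0 identically. Let r, s > 0 and define G(x) := r/x + s·y'(x)/y(x) (the logarithmic derivative of x^r y(x)^s). If G(x₀) = 0 and G'(x₀) = 0, then s·x₀·Q_x(x₀,y₀) − r·y₀·Q_y(x₀,y₀) = 0 and y₀·Q_y(x₀,y₀)²·(Q_x(x₀,y₀) + x₀·Q_{xx}(x₀,y₀)) + x₀·Q_x(x₀,y₀)²·(Q_y(x₀,y₀) + y₀·Q_{yy}(x₀,y₀)) − 2·x₀·y₀·Q_x(x₀,y₀)·Q_y(x₀,y₀)·Q_{xy}(x₀,y₀) = 0. -/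
open MvPolynomial

lemma pderiv_comm' {σ : Type*} [DecidableEq σ] {R : Type*} [CommRing R]
    (i j : σ) (p : MvPolynomial σ R) :
    pderiv i (pderiv j p) = pderiv j (pderiv i p) := by
  induction p using MvPolynomial.induction_on with
  | C a => simp [pderiv_C]
  | add p q hp hq => simp [map_add, hp, hq]
  | mul_X p k hp => simp [pderiv_mul, pderiv_X, hp, Pi.single_apply, apply_ite (pderiv i), apply_ite (pderiv j), pderiv_one, pderiv_C]; ring

lemma eval2_hasDerivAt (Q : MvPolynomial (Fin 2) ℂ) {u v : ℂ → ℂ} {x u' v' : ℂ}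
    (hu : HasDerivAt u u' x) (hv : HasDerivAt v v' x) :
    HasDerivAt (fun t => eval ![u t, v t] Q)
      (eval ![u x, v x] (pderiv 0 Q) * u' + eval ![u x, v x] (pderiv 1 Q) * v') x := by
  induction Q using MvPolynomial.induction_on with
  | C a => simpa [pderiv_C] using hasDerivAt_const x (a : ℂ)
  | add p q hp hq =>
      have := hp.add hq
      simp only [map_add] at this ⊢
      refine this.congr_deriv ?_
      ring
  | mul_X p i hp =>
      obtain rfl | rfl : i = 0 ∨ i = 1 := by omega
      · have h := hp.mul hu
        have e : (fun t => eval ![u t, v t] (p * X 0)) = fun t => eval ![u t, v t] p * u t := by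
          funext t; simp [eval_mul]
        rw [e]
        refine h.congr_deriv ?_
        simp [pderiv_mul, pderiv_X]
        ring
      · have h := hp.mul hv
        have e : (fun t => eval ![u t, v t] (p * X 1)) = fun t => eval ![u t, v t] p * v t := by
          funext t; simp [eval_mul]
        rw [e]
        refine h.congr_deriv ?_
        simp [pderiv_mul, pderiv_X]
        ring

/-- Proposition on the set "monkey" of degenerate directions: if `(x₀, y₀)` is a
point of `{Q = 0}` with `x₀, y₀ ≠ 0` and `Q_y(x₀,y₀) ≠ 0`, parametrized locally
as a graph `y = y(x)`, and the logarithmic derivative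
`G(x) = r/x + s y'(x)/y(x)` of `x^r y(x)^s` satisfies `G(x₀) = 0 = G'(x₀)`,
then `(x₀, y₀, r/s)` satisfies the second and third generators of the ideal `J`:
`s x Q_x - r y Q_y = 0` and
`y Q_y² (Q_x + x Q_{xx}) + x Q_x² (Q_y + y Q_{yy}) - 2 x y Q_x Q_y Q_{xy} = 0`. -/
theorem stmt_8 (Q : MvPolynomial (Fin 2) ℂ)
    (x₀ y₀ : ℂ) (hx₀ : x₀ ≠ 0) (hy₀ : y₀ ≠ 0)
    (hQ0 : eval ![x₀, y₀] Q = 0)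
    (hQy : eval ![x₀, y₀] (pderiv 1 Q) ≠ 0)
    (V : Set ℂ) (hV : IsOpen V) (hx₀V : x₀ ∈ V)
    (y : ℂ → ℂ) (hy : DifferentiableOn ℂ y V) (hyx₀ : y x₀ = y₀)
    (hgraph : ∀ x ∈ V, eval ![x, y x] Q = 0)
    (r s : ℝ) (hr : 0 < r) (hs : 0 < s)
    (G : ℂ → ℂ)
    (hG : ∀ x : ℂ, G x = (r : ℂ) / x + (s : ℂ) * deriv y x / y x)
    (hG0 : G x₀ = 0) (hG'0 : deriv G x₀ = 0) :
    (s : ℂ) * x₀ * eval ![x₀, y₀] (pderiv 0 Q) -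
        (r : ℂ) * y₀ * eval ![x₀, y₀] (pderiv 1 Q) = 0 ∧
    y₀ * (eval ![x₀, y₀] (pderiv 1 Q)) ^ 2 *
          (eval ![x₀, y₀] (pderiv 0 Q) + x₀ * eval ![x₀, y₀] (pderiv 0 (pderiv 0 Q))) +
        x₀ * (eval ![x₀, y₀] (pderiv 0 Q)) ^ 2 *
          (eval ![x₀, y₀] (pderiv 1 Q) + y₀ * eval ![x₀, y₀] (pderiv 1 (pderiv 1 Q))) -
        2 * x₀ * y₀ * eval ![x₀, y₀] (pderiv 0 Q) * eval ![x₀, y₀] (pderiv 1 Q) *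
          eval ![x₀, y₀] (pderiv 1 (pderiv 0 Q)) = 0 := by
  have hs' : (s : ℂ) ≠ 0 := by exact_mod_cast hs.ne'
  set a : ℂ := deriv y x₀ with ha
  set b : ℂ := deriv (deriv y) x₀ with hb
  have hyAn : AnalyticOnNhd ℂ y V := hy.analyticOnNhd hV
  have hy'An : AnalyticOnNhd ℂ (deriv y) V := hyAn.deriv_of_isOpen hV
  have hdy : HasDerivAt y a x₀ := (hy.differentiableAt (hV.mem_nhds hx₀V)).hasDerivAt
  have hdy' : HasDerivAt (deriv y) b x₀ :=
    ((hy'An x₀ hx₀V).differentiableAt).hasDerivAt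
  -- first relation from implicit differentiation
  have hD0 : ∀ x ∈ V,
      eval ![x, y x] (pderiv 0 Q) + eval ![x, y x] (pderiv 1 Q) * deriv y x = 0 := by
    intro x hx
    have hdx : HasDerivAt y (deriv y x) x := (hy.differentiableAt (hV.mem_nhds hx)).hasDerivAt
    have hF : HasDerivAt (fun t => eval ![t, y t] Q)
        (eval ![x, y x] (pderiv 0 Q) * 1 + eval ![x, y x] (pderiv 1 Q) * deriv y x) x :=
      eval2_hasDerivAt Q (hasDerivAt_id x) hdx
    have hEq : (fun t => eval ![t, y t] Q) =ᶠ[nhds x] fun _ => (0 : ℂ) :=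
      Filter.eventuallyEq_of_mem (hV.mem_nhds hx) (fun t ht => hgraph t ht)
    have hz : deriv (fun t => eval ![t, y t] Q) x = 0 := by
      rw [hEq.deriv_eq]; simp
    have := hF.deriv
    rw [hz] at this
    linear_combination -this
  have e1 : eval ![x₀, y₀] (pderiv 0 Q) + eval ![x₀, y₀] (pderiv 1 Q) * a = 0 := by
    have := hD0 x₀ hx₀V
    rwa [hyx₀, ← ha] at this
  -- second derivative relation
  have hA : HasDerivAt (fun x => eval ![x, y x] (pderiv 0 Q))
      (eval ![x₀, y₀] (pderiv 0 (pderiv 0 Q)) * 1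
        + eval ![x₀, y₀] (pderiv 1 (pderiv 0 Q)) * a) x₀ := by
    have := eval2_hasDerivAt (pderiv 0 Q) (hasDerivAt_id x₀) hdy
    rwa [hyx₀] at this
  have hB : HasDerivAt (fun x => eval ![x, y x] (pderiv 1 Q))
      (eval ![x₀, y₀] (pderiv 0 (pderiv 1 Q)) * 1
        + eval ![x₀, y₀] (pderiv 1 (pderiv 1 Q)) * a) x₀ := by
    have := eval2_hasDerivAt (pderiv 1 Q) (hasDerivAt_id x₀) hdy
    rwa [hyx₀] at this
  have hD' : HasDerivAt
      (fun x => eval ![x, y x] (pderiv 0 Q) + eval ![x, y x] (pderiv 1 Q) * deriv y x)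
      ((eval ![x₀, y₀] (pderiv 0 (pderiv 0 Q)) * 1
        + eval ![x₀, y₀] (pderiv 1 (pderiv 0 Q)) * a)
       + ((eval ![x₀, y₀] (pderiv 0 (pderiv 1 Q)) * 1
        + eval ![x₀, y₀] (pderiv 1 (pderiv 1 Q)) * a) * a
          + eval ![x₀, y₀] (pderiv 1 Q) * b)) x₀ := by
    have := hA.add (hB.mul hdy')
    rwa [hyx₀] at this
  have hDz : deriv
      (fun x => eval ![x, y x] (pderiv 0 Q) + eval ![x, y x] (pderiv 1 Q) * deriv y x) x₀ = 0 := by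
    have hEq : (fun x => eval ![x, y x] (pderiv 0 Q) + eval ![x, y x] (pderiv 1 Q) * deriv y x)
        =ᶠ[nhds x₀] fun _ => (0 : ℂ) :=
      Filter.eventuallyEq_of_mem (hV.mem_nhds hx₀V) (fun t ht => hD0 t ht)
    rw [hEq.deriv_eq]; simp
  have e2 : (eval ![x₀, y₀] (pderiv 0 (pderiv 0 Q)) * 1
        + eval ![x₀, y₀] (pderiv 1 (pderiv 0 Q)) * a)
       + ((eval ![x₀, y₀] (pderiv 0 (pderiv 1 Q)) * 1
        + eval ![x₀, y₀] (pderiv 1 (pderiv 1 Q)) * a) * a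
          + eval ![x₀, y₀] (pderiv 1 Q) * b) = 0 := by
    have := hD'.deriv
    rw [hDz] at this
    linear_combination -this
  rw [pderiv_comm' 0 1 Q] at e2
  -- relations from G
  have e3 : (r : ℂ) * y₀ + (s : ℂ) * a * x₀ = 0 := by
    have h0 := hG0
    rw [hG x₀, hyx₀, ← ha] at h0
    field_simp at h0
    linear_combination h0
  have hGfun : G = fun x => (r : ℂ) / x + (s : ℂ) * deriv y x / y x := funext hG
  have hGd : HasDerivAt G
      ((r : ℂ) * (-(x₀ ^ 2)⁻¹) +
        ((0 * deriv y x₀ + (s : ℂ) * b) * y x₀ - (s : ℂ) * deriv y x₀ * a) / y x₀ ^ 2) x₀ := by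
    rw [hGfun]
    have h1 : HasDerivAt (fun x : ℂ => (r : ℂ) / x) ((r : ℂ) * (-(x₀ ^ 2)⁻¹)) x₀ := by
      simpa [div_eq_mul_inv] using (hasDerivAt_inv hx₀).const_mul (r : ℂ)
    have h2 : HasDerivAt (fun x : ℂ => (s : ℂ) * deriv y x / y x)
        (((0 * deriv y x₀ + (s : ℂ) * b) * y x₀ - (s : ℂ) * deriv y x₀ * a) / y x₀ ^ 2) x₀ :=
      HasDerivAt.div ((hasDerivAt_const x₀ ((s : ℂ))).mul hdy') hdy (by rw [hyx₀]; exact hy₀)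
    exact h1.add h2
  have e4 : (r : ℂ) * (-(x₀ ^ 2)⁻¹) +
      ((0 * a + (s : ℂ) * b) * y₀ - (s : ℂ) * a * a) / y₀ ^ 2 = 0 := by
    have := hGd.deriv
    rw [hG'0] at this
    rw [hyx₀, ← ha] at this
    linear_combination -this
  have e4' : -(r : ℂ) * y₀ ^ 2 + (s : ℂ) * (b * y₀ - a ^ 2) * x₀ ^ 2 = 0 := by
    have hx2 : (x₀ : ℂ) ^ 2 ≠ 0 := pow_ne_zero 2 hx₀
    have hy2 : (y₀ : ℂ) ^ 2 ≠ 0 := pow_ne_zero 2 hy₀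
    field_simp at e4
    linear_combination e4
  constructor
  · linear_combination ((s : ℂ) * x₀) * e1 - eval ![x₀, y₀] (pderiv 1 Q) * e3
  · have e5 : x₀ * y₀ * b - x₀ * a ^ 2 + a * y₀ = 0 := by
      have hsx : (s : ℂ) * x₀ ≠ 0 := mul_ne_zero hs' hx₀
      apply mul_left_cancel₀ hsx
      rw [mul_zero]
      linear_combination e4' + y₀ * e3
    set Qx := eval ![x₀, y₀] (pderiv 0 Q)
    set Qy := eval ![x₀, y₀] (pderiv 1 Q)
    set Qxx := eval ![x₀, y₀] (pderiv 0 (pderiv 0 Q))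
    set Qxy := eval ![x₀, y₀] (pderiv 1 (pderiv 0 Q))
    set Qyy := eval ![x₀, y₀] (pderiv 1 (pderiv 1 Q))
    have e6 : -x₀ * Qy * a ^ 2 + a * y₀ * Qy - x₀ * y₀ * Qxx - 2 * x₀ * y₀ * Qxy * a
        - x₀ * y₀ * Qyy * a ^ 2 = 0 := by
      linear_combination Qy * e5 - x₀ * y₀ * e2
    linear_combination (-Qy ^ 2) * e6 +
      (y₀ * Qy ^ 2 - 2 * x₀ * y₀ * Qxy * Qy - (x₀ * Qy + x₀ * y₀ * Qyy) * (Qy * a - Qx)) * e1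
end

section
/- Let r̂, ŝ > 0 and β ∈ ℝ with ŝ·β ≠ r̂, let c ∈ ℂ with c ≠ 0, let θ ∈ ℝ, and let φ be a function holomorphic on a punctured disk {x ∈ ℂ : 0 < |x| < δ} such that φ(x) → 0 and x·φ'(x) → 0 as x → 0. For 0 < t < δ define h_θ(t) := −r̂·log t − ŝ·log( |c| · t^{−β} · |1 + φ(t·e^{iθ})| ). Then t·h_θ'(t) → ŝ·β − r̂ as t → 0⁺. Consequently there exists t₀ ∈ (0, δ) such that h_θ is strictly monotone on (0, t₀]; moreover h_θ(t) → +∞ as t → 0⁺ if ŝ·β < r̂, and h_θ(t) → −∞ as t → 0⁺ if ŝ·β > r̂. -/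
open Filter

set_option maxHeartbeats 1000000 in
/-- Lemma "radial": the height `h_θ(t) = -r̂ log t - ŝ log(|c| t^{-β} |1 + φ(t e^{iθ})|)`
along a radial arc of a Puiseux branch `y(x) = c x^{-β} (1 + φ(x))` with
`φ(x) = o(1)`, `x φ'(x) = o(1)`, satisfies `t h_θ'(t) → ŝβ - r̂` as `t → 0⁺`;
hence `h_θ` is strictly monotone near `0⁺`, and tends to `+∞` or `-∞`
according to whether `ŝβ < r̂` or `ŝβ > r̂`. -/
theorem stmt_9 (rhat shat β : ℝ) (hr : 0 < rhat) (hs : 0 < shat)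
    (hβ : shat * β ≠ rhat)
    (c : ℂ) (hc : c ≠ 0) (θ : ℝ) (δ : ℝ) (hδ : 0 < δ)
    (φ : ℂ → ℂ)
    (hφ : DifferentiableOn ℂ φ {x : ℂ | 0 < ‖x‖ ∧ ‖x‖ < δ})
    (hφ0 : Tendsto φ (nhdsWithin 0 {(0 : ℂ)}ᶜ) (nhds 0))
    (hφ'0 : Tendsto (fun x : ℂ => x * deriv φ x) (nhdsWithin 0 {(0 : ℂ)}ᶜ) (nhds 0))
    (hθfun : ℝ → ℝ)
    (hdef : ∀ t : ℝ, hθfun t = -rhat * Real.log t -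
      shat * Real.log (‖c‖ * t ^ (-β) *
        ‖1 + φ ((t : ℂ) * Complex.exp (θ * Complex.I))‖)) :
    Tendsto (fun t : ℝ => t * deriv hθfun t) (nhdsWithin 0 (Set.Ioi 0))
        (nhds (shat * β - rhat)) ∧
    (∃ t₀ ∈ Set.Ioo 0 δ,
      StrictMonoOn hθfun (Set.Ioc 0 t₀) ∨ StrictAntiOn hθfun (Set.Ioc 0 t₀)) ∧
    (shat * β < rhat → Tendsto hθfun (nhdsWithin 0 (Set.Ioi 0)) atTop) ∧
    (rhat < shat * β → Tendsto hθfun (nhdsWithin 0 (Set.Ioi 0)) atBot) := by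
  set L : ℝ := shat * β - rhat with hLdef
  have hLne : L ≠ 0 := sub_ne_zero.mpr hβ
  set e : ℂ := Complex.exp ((θ : ℂ) * Complex.I) with hedef
  have habs_e : ‖e‖ = 1 := Complex.norm_exp_ofReal_mul_I θ
  have he_ne : e ≠ 0 := Complex.exp_ne_zero _
  -- the domain of φ is open
  have hSopen : IsOpen {x : ℂ | 0 < ‖x‖ ∧ ‖x‖ < δ} := by
    have : {x : ℂ | 0 < ‖x‖ ∧ ‖x‖ < δ}
        = (fun x : ℂ => ‖x‖) ⁻¹' Set.Ioo 0 δ := rfl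
    rw [this]
    exact isOpen_Ioo.preimage continuous_norm
  -- choose δ₂ where |φ| < 1/2
  obtain ⟨δ₂, hδ₂, hφsmall⟩ : ∃ δ₂ > 0, ∀ x : ℂ, x ≠ 0 → ‖x‖ < δ₂ →
      ‖φ x‖ < 1/2 := by
    rw [Metric.tendsto_nhdsWithin_nhds] at hφ0
    obtain ⟨δ₂, hδ₂, h⟩ := hφ0 (1/2) (by norm_num)
    refine ⟨δ₂, hδ₂, fun x hx hx' => ?_⟩
    have := h (x := x) hx (by simpa [Complex.dist_eq] using hx')
    simpa [Complex.dist_eq] using this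
  set δ₁ : ℝ := min δ δ₂ with hδ₁def
  have hδ₁ : 0 < δ₁ := lt_min hδ hδ₂
  have hδ₁δ : δ₁ ≤ δ := min_le_left _ _
  -- basic facts for t ∈ Ioo 0 δ₁
  have habs_te : ∀ t : ℝ, 0 < t → ‖(t : ℂ) * e‖ = t := by
    intro t ht
    rw [norm_mul, habs_e, mul_one, Complex.norm_real, Real.norm_eq_abs, abs_of_pos ht]
  have hmemS : ∀ t ∈ Set.Ioo (0:ℝ) δ₁, ((t : ℂ) * e) ∈
      {x : ℂ | 0 < ‖x‖ ∧ ‖x‖ < δ} := by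
    intro t ht
    refine ⟨by rw [habs_te t ht.1]; exact ht.1, ?_⟩
    rw [habs_te t ht.1]; exact lt_of_lt_of_le ht.2 hδ₁δ
  have hsmall : ∀ t ∈ Set.Ioo (0:ℝ) δ₁,
      ‖φ ((t : ℂ) * e)‖ < 1/2 := by
    intro t ht
    refine hφsmall _ ?_ ?_
    · intro h0
      have h := habs_te t ht.1
      rw [h0] at h
      simp at h
      linarith [ht.1]
    · rw [habs_te t ht.1]; exact lt_of_lt_of_le ht.2 (min_le_right _ _)
  have hre_pos : ∀ t ∈ Set.Ioo (0:ℝ) δ₁, (1/2 : ℝ) < (1 + φ ((t : ℂ) * e)).re := by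
    intro t ht
    have h1 : |(φ ((t : ℂ) * e)).re| ≤ ‖φ ((t : ℂ) * e)‖ :=
      Complex.abs_re_le_norm _
    have h2 := hsmall t ht
    have : -(1/2 : ℝ) < (φ ((t : ℂ) * e)).re := by
      have := (abs_le.mp h1).1
      linarith
    simpa [Complex.add_re] using by linarith
  have hslit : ∀ t ∈ Set.Ioo (0:ℝ) δ₁, (1 + φ ((t : ℂ) * e)) ∈ Complex.slitPlane := by
    intro t ht
    exact Or.inl (by linarith [hre_pos t ht])
  have habsw_pos : ∀ t ∈ Set.Ioo (0:ℝ) δ₁,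
      0 < ‖1 + φ ((t : ℂ) * e)‖ := by
    intro t ht
    have h := Complex.abs_re_le_norm (1 + φ ((t : ℂ) * e))
    have h2 := hre_pos t ht
    linarith [le_abs_self ((1 + φ ((t : ℂ) * e)).re)]
  have hw_ne : ∀ t ∈ Set.Ioo (0:ℝ) δ₁, (1 + φ ((t : ℂ) * e)) ≠ 0 := by
    intro t ht h0
    have := habsw_pos t ht
    rw [h0] at this; simp at this
  -- the smooth model g
  set g : ℝ → ℝ := fun t => L * Real.log t - shat * Real.log ‖c‖
      - shat * (Complex.log (1 + φ ((t : ℂ) * e))).re with hgdef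
  have hEq : ∀ t ∈ Set.Ioo (0:ℝ) δ₁, hθfun t = g t := by
    intro t ht
    rw [hdef t]
    simp only [hgdef, hLdef]
    have hcne : ‖c‖ ≠ 0 := norm_ne_zero_iff.mpr hc
    have hrpow : (0:ℝ) < t ^ (-β) := Real.rpow_pos_of_pos ht.1 _
    have hwne : ‖1 + φ ((t : ℂ) * e)‖ ≠ 0 := ne_of_gt (habsw_pos t ht)
    rw [Real.log_mul (mul_ne_zero hcne (ne_of_gt hrpow)) hwne,
      Real.log_mul hcne (ne_of_gt hrpow), Real.log_rpow ht.1,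
      Complex.log_re]
    ring
  -- derivative of g, hence of hθfun, on Ioo 0 δ₁
  have hHD : ∀ t ∈ Set.Ioo (0:ℝ) δ₁, HasDerivAt hθfun
      (L / t - shat * (e * deriv φ ((t : ℂ) * e) / (1 + φ ((t : ℂ) * e))).re) t := by
    intro t ht
    have h1 : HasDerivAt (fun s : ℝ => (s : ℂ) * e) e t := by
      simpa using (Complex.ofRealCLM.hasDerivAt (x := t)).mul_const e
    have hφd : HasDerivAt φ (deriv φ ((t : ℂ) * e)) ((t : ℂ) * e) :=
      (hφ.differentiableAt (hSopen.mem_nhds (hmemS t ht))).hasDerivAt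
    have h2 : HasDerivAt (fun s : ℝ => φ ((s : ℂ) * e))
        (e • deriv φ ((t : ℂ) * e)) t := HasDerivAt.scomp t hφd h1
    have h3 : HasDerivAt (fun s : ℝ => 1 + φ ((s : ℂ) * e))
        (e • deriv φ ((t : ℂ) * e)) t := h2.const_add 1
    have h4 : HasDerivAt (fun s : ℝ => Complex.log (1 + φ ((s : ℂ) * e)))
        ((e • deriv φ ((t : ℂ) * e)) • (1 + φ ((t : ℂ) * e))⁻¹) t :=
      HasDerivAt.scomp t (Complex.hasDerivAt_log (hslit t ht)) h3
    have h5 : HasDerivAt (fun s : ℝ => (Complex.log (1 + φ ((s : ℂ) * e))).re)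
        (((e • deriv φ ((t : ℂ) * e)) • (1 + φ ((t : ℂ) * e))⁻¹).re) t :=
      Complex.reCLM.hasFDerivAt.comp_hasDerivAt t h4
    have hlog : HasDerivAt Real.log t⁻¹ t := Real.hasDerivAt_log (ne_of_gt ht.1)
    have hg' : HasDerivAt g
        (L * t⁻¹ - shat * (((e • deriv φ ((t : ℂ) * e)) •
          (1 + φ ((t : ℂ) * e))⁻¹).re)) t := by
      exact ((hlog.const_mul L).sub_const _).sub (h5.const_mul shat)
    have heq2 : (e • deriv φ ((t : ℂ) * e)) • (1 + φ ((t : ℂ) * e))⁻¹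
        = e * deriv φ ((t : ℂ) * e) / (1 + φ ((t : ℂ) * e)) := by
      simp [smul_eq_mul, div_eq_mul_inv]
    have hg'' : HasDerivAt g
        (L / t - shat * (e * deriv φ ((t : ℂ) * e) / (1 + φ ((t : ℂ) * e))).re) t := by
      rw [div_eq_mul_inv, ← heq2]
      exact hg'
    refine hg''.congr_of_eventuallyEq ?_
    filter_upwards [isOpen_Ioo.mem_nhds ht] with s hsmem
    exact hEq s hsmem
  have hIooMem : Set.Ioo (0:ℝ) δ₁ ∈ nhdsWithin (0:ℝ) (Set.Ioi 0) :=
    Ioo_mem_nhdsGT_of_mem ⟨le_refl 0, hδ₁⟩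
  -- limits of the building blocks
  have hmap : Tendsto (fun t : ℝ => (t : ℂ) * e) (nhdsWithin 0 (Set.Ioi 0))
      (nhdsWithin 0 {(0:ℂ)}ᶜ) := by
    apply tendsto_nhdsWithin_of_tendsto_nhds_of_eventually_within
    · have hcont : Continuous (fun t : ℝ => (t : ℂ) * e) := by continuity
      have : Tendsto (fun t : ℝ => (t : ℂ) * e) (nhds 0) (nhds 0) := by
        simpa using hcont.tendsto (0:ℝ)
      exact this.mono_left nhdsWithin_le_nhds
    · filter_upwards [self_mem_nhdsWithin] with t (ht : (0:ℝ) < t)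
      simp only [Set.mem_compl_iff, Set.mem_singleton_iff]
      exact mul_ne_zero (by exact_mod_cast ne_of_gt ht) he_ne
  have hnum : Tendsto (fun t : ℝ => (t : ℂ) * e * deriv φ ((t : ℂ) * e))
      (nhdsWithin 0 (Set.Ioi 0)) (nhds 0) := hφ'0.comp hmap
  have hden : Tendsto (fun t : ℝ => 1 + φ ((t : ℂ) * e))
      (nhdsWithin 0 (Set.Ioi 0)) (nhds 1) := by
    have := (hφ0.comp hmap).const_add (1 : ℂ)
    simpa using this
  have hquot : Tendsto (fun t : ℝ => (t : ℂ) * e * deriv φ ((t : ℂ) * e)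
      / (1 + φ ((t : ℂ) * e))) (nhdsWithin 0 (Set.Ioi 0)) (nhds 0) := by
    simpa [Pi.div_def] using hnum.div hden one_ne_zero
  have hre0 : Tendsto (fun t : ℝ => ((t : ℂ) * e * deriv φ ((t : ℂ) * e)
      / (1 + φ ((t : ℂ) * e))).re) (nhdsWithin 0 (Set.Ioi 0)) (nhds 0) := by
    have := (Complex.continuous_re.tendsto (0:ℂ)).comp hquot
    exact this
  -- Part 1
  have part1 : Tendsto (fun t : ℝ => t * deriv hθfun t) (nhdsWithin 0 (Set.Ioi 0))
      (nhds L) := by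
    have hA : Tendsto (fun t : ℝ => L - shat * ((t : ℂ) * e * deriv φ ((t : ℂ) * e)
        / (1 + φ ((t : ℂ) * e))).re) (nhdsWithin 0 (Set.Ioi 0)) (nhds (L - shat * 0)) :=
      tendsto_const_nhds.sub (hre0.const_mul shat)
    rw [show L - shat * 0 = L by ring] at hA
    refine hA.congr' ?_
    filter_upwards [hIooMem] with t ht
    have htne : t ≠ 0 := ne_of_gt ht.1
    rw [(hHD t ht).deriv]
    have h1 : ((t : ℂ) * e * deriv φ ((t : ℂ) * e) / (1 + φ ((t : ℂ) * e))).re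
        = t * (e * deriv φ ((t : ℂ) * e) / (1 + φ ((t : ℂ) * e))).re := by
      rw [show (t : ℂ) * e * deriv φ ((t : ℂ) * e) / (1 + φ ((t : ℂ) * e))
        = (t : ℂ) * (e * deriv φ ((t : ℂ) * e) / (1 + φ ((t : ℂ) * e))) from by ring,
        Complex.re_ofReal_mul]
    rw [h1]
    field_simp
  refine ⟨part1, ?_, ?_, ?_⟩
  -- Part 2: strict monotonicity
  · obtain ⟨ε, hε, hclose⟩ := Metric.tendsto_nhdsWithin_nhds.mp part1 |L| (abs_pos.mpr hLne)
    set t₀ : ℝ := min (δ₁/2) (ε/2) with ht₀def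
    have ht₀pos : 0 < t₀ := lt_min (by linarith) (by linarith)
    have ht₀δ₁ : t₀ < δ₁ := lt_of_le_of_lt (min_le_left _ _) (by linarith)
    have ht₀ε : t₀ < ε := lt_of_le_of_lt (min_le_right _ _) (by linarith)
    have hsub : Set.Ioc (0:ℝ) t₀ ⊆ Set.Ioo 0 δ₁ := fun x hx =>
      ⟨hx.1, lt_of_le_of_lt hx.2 ht₀δ₁⟩
    have hcont : ContinuousOn hθfun (Set.Ioc 0 t₀) := fun x hx =>
      ((hHD x (hsub hx)).differentiableAt.continuousAt).continuousWithinAt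
    have hkey : ∀ x ∈ Set.Ioo (0:ℝ) t₀, |x * deriv hθfun x - L| < |L| := by
      intro x hx
      have hx0 : x ∈ Set.Ioi (0:ℝ) := hx.1
      have hd : dist x 0 < ε := by
        rw [Real.dist_eq, sub_zero, abs_of_pos hx.1]
        exact lt_trans hx.2 ht₀ε
      have := hclose hx0 hd
      rwa [Real.dist_eq] at this
    refine ⟨t₀, ⟨ht₀pos, lt_of_lt_of_le ht₀δ₁ hδ₁δ⟩, ?_⟩
    rcases lt_or_gt_of_ne hLne with hL | hL
    · -- L < 0 : strictly antitone
      refine Or.inr (strictAntiOn_of_deriv_neg (convex_Ioc 0 t₀) hcont ?_)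
      intro x hx
      rw [interior_Ioc] at hx
      have h := hkey x hx
      have h2 : x * deriv hθfun x < 0 := by
        have := (abs_lt.mp h).2
        rw [abs_of_neg hL] at this
        linarith
      have h3 := div_neg_of_neg_of_pos h2 hx.1
      rwa [mul_div_cancel_left₀ _ (ne_of_gt hx.1)] at h3
    · -- L > 0 : strictly monotone
      refine Or.inl (strictMonoOn_of_deriv_pos (convex_Ioc 0 t₀) hcont ?_)
      intro x hx
      rw [interior_Ioc] at hx
      have h := hkey x hx
      have h2 : 0 < x * deriv hθfun x := by
        have := (abs_lt.mp h).1
        rw [abs_of_pos hL] at this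
        linarith
      have h3 := div_pos h2 hx.1
      rwa [mul_div_cancel_left₀ _ (ne_of_gt hx.1)] at h3
  -- Parts 3, 4: limits at 0⁺
  all_goals {
    intro hlt
    have habs1 : Tendsto (fun t : ℝ => ‖1 + φ ((t : ℂ) * e)‖)
        (nhdsWithin 0 (Set.Ioi 0)) (nhds 1) := by
      have h := (continuous_norm.tendsto (1:ℂ)).comp hden
      rw [norm_one] at h
      exact h
    have hψ : Tendsto (fun t : ℝ => (Complex.log (1 + φ ((t : ℂ) * e))).re)
        (nhdsWithin 0 (Set.Ioi 0)) (nhds 0) := by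
      simp only [Complex.log_re]
      have := (Real.continuousAt_log one_ne_zero).tendsto.comp habs1
      simpa [Real.log_one, Function.comp_def] using this
    have hrest : Tendsto (fun t : ℝ => -(shat * Real.log ‖c‖)
        - shat * (Complex.log (1 + φ ((t : ℂ) * e))).re)
        (nhdsWithin 0 (Set.Ioi 0)) (nhds (-(shat * Real.log ‖c‖) - shat * 0)) :=
      tendsto_const_nhds.sub (hψ.const_mul shat)
    have hEq' : (fun t : ℝ => L * Real.log t + (-(shat * Real.log ‖c‖)
        - shat * (Complex.log (1 + φ ((t : ℂ) * e))).re)) =ᶠ[nhdsWithin 0 (Set.Ioi 0)]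
        hθfun := by
      filter_upwards [hIooMem] with t ht
      rw [hEq t ht, hgdef]
      ring
    first
    | · -- atTop case : L < 0
        have hL : L < 0 := by rw [hLdef]; linarith
        have hmain : Tendsto (fun t : ℝ => L * Real.log t)
            (nhdsWithin 0 (Set.Ioi 0)) atTop :=
          (tendsto_const_mul_atTop_of_neg hL).mpr Real.tendsto_log_nhdsGT_zero
        exact Tendsto.congr' hEq' (hmain.atTop_add hrest)
    | · -- atBot case : L > 0
        have hL : 0 < L := by rw [hLdef]; linarith
        have hmain : Tendsto (fun t : ℝ => L * Real.log t)
            (nhdsWithin 0 (Set.Ioi 0)) atBot :=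
          (tendsto_const_mul_atBot_of_pos hL).mpr Real.tendsto_log_nhdsGT_zero
        exact Tendsto.congr' hEq' (hmain.atBot_add hrest)
  }
end

section
/- Let g be holomorphic on a punctured disk D* = {x ∈ ℂ : 0 < |x| < δ} such that x^m·g(x) extends holomorphically to the full disk for some nonnegative integer m, and let k ≥ 1 be an integer. Suppose that for every k-th root of unity ξ ≠ 1 there exists x ∈ D* with g(ξ·x) ≠ g(x) (minimality of k). Then there exists ε ∈ (0, δ) such that the map G(x) := (xᵏ, g(x)) is injective on the punctured disk {x : 0 < |x| < ε}. -/
/-- Main step of Theorem "classify" (i)–(ii): if `g` is holomorphic on the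
punctured disk with at worst a pole at `0` (witnessed by the holomorphic
extension `G` of `x^m g(x)`), and `k ≥ 1` is minimal in the sense that for
every `k`-th root of unity `ξ ≠ 1` the functions `g(ξ ·)` and `g` differ
somewhere on the punctured disk, then `x ↦ (xᵏ, g(x))` is injective on a
sufficiently small punctured disk. -/
theorem stmt_11 (δ : ℝ) (hδ : 0 < δ) (g : ℂ → ℂ)
    (hg : DifferentiableOn ℂ g {x : ℂ | 0 < ‖x‖ ∧ ‖x‖ < δ})
    (m : ℕ) (G : ℂ → ℂ) (hG : DifferentiableOn ℂ G (Metric.ball 0 δ))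
    (hGg : ∀ x : ℂ, 0 < ‖x‖ → ‖x‖ < δ → G x = x ^ m * g x)
    (k : ℕ) (hk : 1 ≤ k)
    (hmin : ∀ ξ : ℂ, ξ ^ k = 1 → ξ ≠ 1 →
      ∃ x : ℂ, 0 < ‖x‖ ∧ ‖x‖ < δ ∧ g (ξ * x) ≠ g x) :
    ∃ ε : ℝ, 0 < ε ∧ ε < δ ∧
      Set.InjOn (fun x : ℂ => (x ^ k, g x))
        {x : ℂ | 0 < ‖x‖ ∧ ‖x‖ < ε} := by
  have hkpos : 0 < k := hk
  -- Key claim: for each nontrivial k-th root of unity, g(ξ·) ≠ g on a small punctured disk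
  have key : ∀ ξ : ℂ, ∃ ε : ℝ, 0 < ε ∧ (ξ ^ k = 1 → ξ ≠ 1 →
      ∀ x : ℂ, 0 < ‖x‖ → ‖x‖ < ε → ‖x‖ < δ →
        g (ξ * x) ≠ g x) := by
    intro ξ
    by_cases hξ1 : ξ ^ k = 1 ∧ ξ ≠ 1
    · obtain ⟨hξk, hξne⟩ := hξ1
      have habsξ : ‖ξ‖ = 1 := by
        have h1 : ‖ξ‖ ^ k = 1 := by
          rw [← norm_pow, hξk, norm_one]
        have h0 : 0 ≤ ‖ξ‖ := norm_nonneg ξ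
        rcases lt_trichotomy (‖ξ‖) 1 with h | h | h
        · exfalso; have := pow_lt_one₀ h0 h hkpos.ne' ; linarith [h1]
        · exact h
        · exfalso; have := one_lt_pow₀ h hkpos.ne'; linarith [h1]
      set h : ℂ → ℂ := fun x => G (ξ * x) - ξ ^ m * G x with hh
      have hmaps : ∀ x : ℂ, x ∈ Metric.ball (0:ℂ) δ → ξ * x ∈ Metric.ball (0:ℂ) δ := by
        intro x hx
        simp only [Metric.mem_ball, Complex.dist_eq, sub_zero] at hx ⊢
        rw [norm_mul, habsξ, one_mul]; exact hx
      have hhd : DifferentiableOn ℂ h (Metric.ball 0 δ) := by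
        apply DifferentiableOn.sub
        · exact (hG.comp (differentiable_id.const_mul ξ).differentiableOn hmaps)
        · exact hG.const_mul _
      have hhan : AnalyticOnNhd ℂ h (Metric.ball 0 δ) :=
        hhd.analyticOnNhd Metric.isOpen_ball
      -- h is not identically zero
      obtain ⟨x₀, hx₀p, hx₀δ, hx₀ne⟩ := hmin ξ hξk hξne
      have hx₀0 : x₀ ≠ 0 := by
        intro h0; rw [h0, norm_zero] at hx₀p; exact lt_irrefl 0 hx₀p
      have hξ0 : ξ ≠ 0 := by
        intro h0; rw [h0, norm_zero] at habsξ; norm_num at habsξ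
      have hval : ∀ x : ℂ, 0 < ‖x‖ → ‖x‖ < δ →
          h x = ξ ^ m * x ^ m * (g (ξ * x) - g x) := by
        intro x hxp hxδ
        have habsx : ‖ξ * x‖ = ‖x‖ := by
          rw [norm_mul, habsξ, one_mul]
        have h1 := hGg (ξ * x) (by rw [habsx]; exact hxp) (by rw [habsx]; exact hxδ)
        have h2 := hGg x hxp hxδ
        simp only [hh, h1, h2, mul_pow]
        ring
      have hne : h x₀ ≠ 0 := by
        rw [hval x₀ hx₀p hx₀δ]
        apply mul_ne_zero (mul_ne_zero (pow_ne_zero _ hξ0) (pow_ne_zero _ hx₀0))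
        exact sub_ne_zero_of_ne hx₀ne
      have h0mem : (0:ℂ) ∈ Metric.ball (0:ℂ) δ := by
        simp [Metric.mem_ball, hδ]
      rcases (hhan 0 h0mem).eventually_eq_zero_or_eventually_ne_zero with hz | hnz
      · exfalso
        have := hhan.eqOn_zero_of_preconnected_of_eventuallyEq_zero
          (convex_ball (0:ℂ) δ).isPreconnected h0mem hz
        have hx₀mem : x₀ ∈ Metric.ball (0:ℂ) δ := by
          simp [Metric.mem_ball, Complex.dist_eq, hx₀δ]
        exact hne (this hx₀mem)
      · obtain ⟨ε, hεpos, hε⟩ := Metric.mem_nhdsWithin_iff.mp hnz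
        refine ⟨ε, hεpos, fun _ _ x hxp hxε hxδ => ?_⟩
        have hx0 : x ≠ 0 := by
          intro h0; rw [h0, norm_zero] at hxp; exact lt_irrefl 0 hxp
        have hhx : h x ≠ 0 := hε ⟨by
          rw [Metric.mem_ball, Complex.dist_eq, sub_zero]; exact hxε,
          Set.mem_compl_singleton_iff.mpr hx0⟩
        rw [hval x hxp hxδ] at hhx
        intro heq
        apply hhx
        rw [heq, sub_self, mul_zero]
    · exact ⟨1, one_pos, fun h1 h2 => absurd ⟨h1, h2⟩ hξ1⟩
  choose e hepos he using key
  set S : Finset ℂ := (Polynomial.nthRoots k (1:ℂ)).toFinset with hS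
  have h1S : (1:ℂ) ∈ S := by
    rw [hS, Multiset.mem_toFinset, Polynomial.mem_nthRoots hkpos, one_pow]
  have hSne : (S.image e).Nonempty := ⟨e 1, Finset.mem_image_of_mem e h1S⟩
  set ε₀ := (S.image e).min' hSne with hε₀
  have hε₀pos : 0 < ε₀ := by
    obtain ⟨ξ, hξS, hξe⟩ := Finset.mem_image.mp ((S.image e).min'_mem hSne)
    rw [hε₀, ← hξe]; exact hepos ξ
  refine ⟨min (δ/2) ε₀, lt_min (by linarith) hε₀pos, lt_of_le_of_lt (min_le_left _ _) (by linarith), ?_⟩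
  intro x hx y hy hxy
  simp only [Set.mem_setOf_eq] at hx hy
  simp only [Prod.mk.injEq] at hxy
  obtain ⟨hxy1, hxy2⟩ := hxy
  have hx0 : x ≠ 0 := by
    intro h0; rw [h0, norm_zero] at hx; exact lt_irrefl 0 hx.1
  set ξ := y / x with hξ
  have hξk : ξ ^ k = 1 := by
    rw [hξ, div_pow, ← hxy1, div_self (pow_ne_zero _ hx0)]
  have hyx : y = ξ * x := by
    rw [hξ, div_mul_cancel₀ _ hx0]
  by_cases hξ1 : ξ = 1
  · rw [hyx, hξ1, one_mul]
  · exfalso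
    have hξS : ξ ∈ S := by
      rw [hS, Multiset.mem_toFinset, Polynomial.mem_nthRoots hkpos]; exact hξk
    have hεle : min (δ/2) ε₀ ≤ e ξ := le_trans (min_le_right _ _)
      ((S.image e).min'_le (e ξ) (Finset.mem_image_of_mem e hξS))
    have hxδ : ‖x‖ < δ := lt_of_lt_of_le (lt_of_lt_of_le hx.2 (min_le_left _ _)) (by linarith)
    exact he ξ hξk hξ1 x hx.1 (lt_of_lt_of_le hx.2 hεle) hxδ (by rw [← hyx, hxy2])
end

section
/- Let P and Q be polynomials in two variables with complex coefficients, let ε > 0 and L₀ > 0, and suppose Q(x, y) ≠ 0 whenever |x| = ε and |y| ≥ L₀. Let d be the degree of P in the variable y. Then for all integers r ≥ 0 and s > d, and for every L ≥ L₀, the iterated contour integral ∮_{|x|=ε} ∮_{|y|=L} x^{−r−1}·y^{−s−1}·P(x,y)/Q(x,y) dy dx equals 0. Moreover, for each fixed x with |x| = ε, already the inner integral ∮_{|y|=L} y^{−s−1}·P(x,y)/Q(x,y) dy equals 0. -/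
open MvPolynomial Filter Real

private lemma key_eval (R : MvPolynomial (Fin 2) ℂ) (x y : ℂ) :
    Polynomial.eval y (MvPolynomial.aeval ![Polynomial.C x, Polynomial.X] R)
      = MvPolynomial.eval ![x, y] R := by
  induction R using MvPolynomial.induction_on with
  | C a => simp
  | add p q hp hq => simp [hp, hq]
  | mul_X p i hp =>
    simp only [map_mul, MvPolynomial.aeval_X, MvPolynomial.eval_X, Polynomial.eval_mul, hp]
    congr 1
    fin_cases i <;> simp

private lemma diff_eval (R : MvPolynomial (Fin 2) ℂ) (x : ℂ) :
    Differentiable ℂ (fun y => MvPolynomial.eval ![x, y] R) := by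
  have := (MvPolynomial.aeval ![Polynomial.C x, Polynomial.X] R).differentiable
  simpa only [key_eval] using this

private lemma upper_eval (R : MvPolynomial (Fin 2) ℂ) (x : ℂ) :
    ∃ C : ℝ, 0 ≤ C ∧ ∀ y : ℂ, 1 ≤ ‖y‖ →
      ‖MvPolynomial.eval ![x, y] R‖ ≤ C * ‖y‖ ^ (degreeOf 1 R) := by
  refine ⟨∑ m ∈ R.support, ‖MvPolynomial.coeff m R‖ * ‖x‖ ^ (m 0), by positivity, fun y hy => ?_⟩
  rw [MvPolynomial.eval_eq', Finset.sum_mul]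
  refine (norm_sum_le _ _).trans (Finset.sum_le_sum fun m hm => ?_)
  rw [Fin.prod_univ_two]
  simp only [Matrix.cons_val_zero, Matrix.cons_val_one, Matrix.head_cons, norm_mul, norm_pow]
  have hm1 : m 1 ≤ degreeOf 1 R := by
    rw [MvPolynomial.degreeOf_eq_sup 1 R]; exact Finset.le_sup (f := fun m => m 1) hm
  calc ‖MvPolynomial.coeff m R‖ * (‖x‖ ^ m 0 * ‖y‖ ^ m 1)
      ≤ ‖MvPolynomial.coeff m R‖ * (‖x‖ ^ m 0 * ‖y‖ ^ degreeOf 1 R) := by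
        exact mul_le_mul_of_nonneg_left
          (mul_le_mul_of_nonneg_left (pow_le_pow_right₀ hy hm1) (by positivity)) (norm_nonneg _)
    _ = ‖MvPolynomial.coeff m R‖ * ‖x‖ ^ m 0 * ‖y‖ ^ degreeOf 1 R := by ring

private lemma lower_eval (Q : MvPolynomial (Fin 2) ℂ) (x : ℂ) (L₀ : ℝ) (hL₀ : 0 < L₀)
    (h : ∀ y : ℂ, L₀ ≤ ‖y‖ → MvPolynomial.eval ![x, y] Q ≠ 0) :
    ∃ c : ℝ, 0 < c ∧ ∃ R : ℝ, ∀ y : ℂ, R ≤ ‖y‖ → c ≤ ‖MvPolynomial.eval ![x, y] Q‖ := by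
  set q : Polynomial ℂ := MvPolynomial.aeval ![Polynomial.C x, Polynomial.X] Q with hq
  have hkey : ∀ y : ℂ, Polynomial.eval y q = MvPolynomial.eval ![x, y] Q :=
    fun y => key_eval Q x y
  rcases le_or_gt q.degree 0 with hdeg | hdeg
  · have heq := Polynomial.eq_C_of_degree_le_zero hdeg
    have hy0 : ‖(L₀ : ℂ)‖ = L₀ := by simp [Complex.norm_real, abs_of_pos hL₀]
    have ha : q.coeff 0 ≠ 0 := by
      intro h0
      apply h (L₀ : ℂ) (le_of_eq hy0.symm)
      rw [← hkey, heq, h0]; simp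
    refine ⟨‖q.coeff 0‖, norm_pos_iff.mpr ha, 0, fun y _ => ?_⟩
    rw [← hkey, heq]; simp
  · have ht := Polynomial.tendsto_norm_atTop q hdeg
      (tendsto_norm_cobounded_atTop (E := ℂ))
    have h1 : ∀ᶠ y in Bornology.cobounded ℂ, 1 ≤ ‖Polynomial.eval y q‖ :=
      ht.eventually (eventually_ge_atTop 1)
    rw [← comap_norm_atTop] at h1
    obtain ⟨t, ht', hsub⟩ := Filter.mem_comap.mp h1
    obtain ⟨R, hR⟩ := mem_atTop_sets.mp ht'
    refine ⟨1, one_pos, R, fun y hy => ?_⟩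
    rw [← hkey]
    exact hsub (hR _ hy)

/-- The vanishing claim (2.5): if `Q(x,y) ≠ 0` whenever `|x| = ε` and `|y| ≥ L₀`,
and `d` is the degree of `P` in `y`, then for all `r ≥ 0`, `s > d` and `L ≥ L₀`
the iterated Cauchy integral
`∮_{|x|=ε} x^{-r-1} ∮_{|y|=L} y^{-s-1} P(x,y)/Q(x,y) dy dx` vanishes, and in
fact for each `x` with `|x| = ε` the inner integral already vanishes. -/
theorem stmt_12 (P Q : MvPolynomial (Fin 2) ℂ) (ε L₀ : ℝ)
    (hε : 0 < ε) (hL₀ : 0 < L₀)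
    (hQ : ∀ x y : ℂ, ‖x‖ = ε → L₀ ≤ ‖y‖ → eval ![x, y] Q ≠ 0)
    (d : ℕ) (hd : d = degreeOf 1 P) :
    ∀ r s : ℕ, d < s → ∀ L : ℝ, L₀ ≤ L →
      ((∮ x in C(0, ε), x ^ (-(r : ℤ) - 1) *
          ∮ y in C(0, L), y ^ (-(s : ℤ) - 1) * (eval ![x, y] P / eval ![x, y] Q)) = 0) ∧
      (∀ x : ℂ, ‖x‖ = ε →
        (∮ y in C(0, L), y ^ (-(s : ℤ) - 1) * (eval ![x, y] P / eval ![x, y] Q)) = 0) := by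
  intro r s hds L hL
  have hL0 : (0 : ℝ) < L := hL₀.trans_le hL
  have inner : ∀ x : ℂ, ‖x‖ = ε →
      (∮ y in C(0, L), y ^ (-(s : ℤ) - 1) * (eval ![x, y] P / eval ![x, y] Q)) = 0 := by
    intro x hx
    set f : ℂ → ℂ := fun y => y ^ (-(s : ℤ) - 1) * (eval ![x, y] P / eval ![x, y] Q) with hf
    have hQx : ∀ y : ℂ, L₀ ≤ ‖y‖ → eval ![x, y] Q ≠ 0 := fun y hy =>
      hQ x y hx hy
    have hdiff : ∀ y : ℂ, L₀ ≤ ‖y‖ → DifferentiableAt ℂ f y := by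
      intro y hy
      have hy0 : y ≠ 0 := by
        intro h0; rw [h0, norm_zero] at hy; linarith
      exact (differentiableAt_zpow.mpr (Or.inl hy0)).mul
        ((diff_eval P x y).div (diff_eval Q x y) (hQx y hy))
    have hconst : ∀ L' : ℝ, L ≤ L' →
        (∮ y in C(0, L'), f y) = ∮ y in C(0, L), f y := by
      intro L' hL'
      refine Complex.circleIntegral_eq_of_differentiable_on_annulus_off_countable hL0 hL'
        Set.countable_empty ?_ ?_
      · intro y hy
        have hyL : L₀ ≤ ‖y‖ := by
          rcases hy with ⟨_, hy2⟩
          rw [Metric.mem_ball, dist_zero_right] at hy2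
          push_neg at hy2
          linarith
        exact (hdiff y hyL).continuousAt.continuousWithinAt
      · intro y hy
        rcases hy with ⟨⟨_, hy2⟩, -⟩
        rw [Metric.mem_closedBall, dist_zero_right] at hy2
        push_neg at hy2
        exact hdiff y (by linarith)
    obtain ⟨C, hC0, hCb⟩ := upper_eval P x
    obtain ⟨c, hc0, R, hcb⟩ := lower_eval Q x L₀ hL₀ hQx
    set M : ℝ := max (max L R) 1 with hM
    set K : ℝ := 2 * π * (C / c) with hK
    have hbound : ∀ L' : ℝ, M ≤ L' → ‖∮ y in C(0, L), f y‖ ≤ K / L' := by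
      intro L' hML
      have h1L : (1 : ℝ) ≤ L' := (le_max_right _ _).trans hML
      have hLL : L ≤ L' := ((le_max_left _ _).trans (le_max_left _ _)).trans hML
      have hRL : R ≤ L' := ((le_max_right _ _).trans (le_max_left _ _)).trans hML
      have hposL : (0 : ℝ) < L' := lt_of_lt_of_le one_pos h1L
      rw [← hconst L' hLL]
      have hC0' : 0 ≤ C * L' ^ d := by positivity
      have hb : ∀ y ∈ Metric.sphere (0 : ℂ) L',
          ‖f y‖ ≤ (L' ^ (s + 1))⁻¹ * (C * L' ^ d / c) := by
        intro y hy
        rw [Metric.mem_sphere, dist_zero_right] at hy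
        have h1y : (1 : ℝ) ≤ ‖y‖ := hy ▸ h1L
        have hRy : R ≤ ‖y‖ := hy ▸ hRL
        have hzp : ‖y ^ (-(s : ℤ) - 1)‖ = (L' ^ (s + 1))⁻¹ := by
          rw [norm_zpow, hy]
          rw [show (-(s : ℤ) - 1) = -((s + 1 : ℕ) : ℤ) by push_cast; ring]
          rw [zpow_neg, zpow_natCast]
        rw [hf]
        simp only [norm_mul, norm_div]
        rw [hzp]
        refine mul_le_mul_of_nonneg_left ?_ (by positivity)
        refine div_le_div₀ hC0' ?_ hc0 (hcb y hRy)
        · calc ‖eval ![x, y] P‖ ≤ C * ‖y‖ ^ (degreeOf 1 P) := hCb y h1y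
            _ = C * L' ^ d := by rw [hy, hd]
      calc ‖∮ y in C(0, L'), f y‖ ≤ 2 * π * L' * ((L' ^ (s + 1))⁻¹ * (C * L' ^ d / c)) := by
            have := circleIntegral.norm_integral_le_of_norm_le_const
              (le_of_lt hposL) hb
            exact this
        _ = (2 * π * (C / c)) * (L' ^ (d + 1) / L' ^ (s + 1)) := by
            field_simp
            ring
        _ ≤ (2 * π * (C / c)) * (1 / L') := by
            refine mul_le_mul_of_nonneg_left ?_ (by positivity)
            rw [div_le_div_iff₀ (by positivity) hposL]
            calc L' ^ (d + 1) * L' = L' ^ (d + 2) := by ring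
              _ ≤ L' ^ (s + 1) := pow_le_pow_right₀ h1L (by omega)
              _ = 1 * L' ^ (s + 1) := by ring
        _ = K / L' := by rw [hK]; ring
    have hlim : Tendsto (fun L' : ℝ => K / L') atTop (nhds 0) :=
      Tendsto.div_atTop tendsto_const_nhds tendsto_id
    have hfin : ‖∮ y in C(0, L), f y‖ ≤ 0 :=
      ge_of_tendsto hlim (eventually_atTop.mpr ⟨M, hbound⟩)
    exact norm_le_zero_iff.mp hfin
  refine ⟨?_, inner⟩
  have hcongr : (∮ x in C(0, ε), x ^ (-(r : ℤ) - 1) *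
      ∮ y in C(0, L), y ^ (-(s : ℤ) - 1) * (eval ![x, y] P / eval ![x, y] Q))
      = ∮ _x in C(0, ε), (0 : ℂ) := by
    refine circleIntegral.integral_congr hε.le fun x hx => ?_
    rw [Metric.mem_sphere, dist_zero_right] at hx
    rw [inner x hx, mul_zero]
  rw [hcongr]
  simp [circleIntegral]
end
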